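/- Let M be a von Neumann algebra on a complex Hilbert space H, let J be a conjugation of H with J γ₀ = γ₀ for a fixed γ₀ ∈ H, and assume j(a) ∈ M' for every a ∈ M, where j(a)ξ = J(a(Jξ)). Let u, v, u̇₁, u̇₂, v̇₁, v̇₂ ∈ M satisfy ((star u)∘u) γ₀ = γ₀, ((star v)∘v) γ₀ = γ₀, and for i = 1, 2: star((star u)∘u̇ᵢ) = −((star u)∘u̇ᵢ) and star((star v)∘v̇ᵢ) = −((star v)∘v̇ᵢ). Set Tᵢ := u̇ᵢ(J(v γ₀)) + u(J(v̇ᵢ γ₀)) for i = 1, 2. Then Im⟪T₁, T₂⟫ = Im⟪u̇₁ γ₀, u̇₂ γ₀⟫ − Im⟪v̇₁ γ₀, v̇₂ γ₀⟫. (Proposition 6.14, formula (SQ5_eq1): the pull-back of the symplectic form of H under Ψ_{γ₀}(u,v) = u·j(v)·γ₀ is the difference of the orbit symplectic forms in the u- and v-variables.) -/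

import Mathlib

/-- Proposition 6.14, formula (SQ5_eq1): the pull-back of the symplectic form
of H under Ψ_{γ₀}(u,v) = u·j(v)·γ₀ is the difference of the orbit symplectic
forms in the u- and v-variables. -/
theorem stmt16 {H : Type*} [NormedAddCommGroup H] [InnerProductSpace ℂ H]
    [CompleteSpace H]
    (M : VonNeumannAlgebra H) (γ₀ : H) (J : H → H)
    (hJadd : ∀ ξ η : H, J (ξ + η) = J ξ + J η)
    (hJsmul : ∀ (c : ℂ) (ξ : H), J (c • ξ) = (starRingEnd ℂ c) • J ξ)
    (hJnorm : ∀ ξ : H, ‖J ξ‖ = ‖ξ‖)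
    (hJinv : ∀ ξ : H, J (J ξ) = ξ)
    (hJγ₀ : J γ₀ = γ₀)
    (j : (H →L[ℂ] H) → (H →L[ℂ] H))
    (hj : ∀ (a : H →L[ℂ] H) (ξ : H), j a ξ = J (a (J ξ)))
    (hjM : ∀ a : H →L[ℂ] H, a ∈ M → j a ∈ M.commutant)
    (u v du₁ du₂ dv₁ dv₂ : H →L[ℂ] H)
    (hu : u ∈ M) (hv : v ∈ M)
    (hdu₁ : du₁ ∈ M) (hdu₂ : du₂ ∈ M) (hdv₁ : dv₁ ∈ M) (hdv₂ : dv₂ ∈ M)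
    (huγ : (star u * u) γ₀ = γ₀) (hvγ : (star v * v) γ₀ = γ₀)
    (h₁ : star (star u * du₁) = -(star u * du₁))
    (h₂ : star (star u * du₂) = -(star u * du₂))
    (h₃ : star (star v * dv₁) = -(star v * dv₁))
    (h₄ : star (star v * dv₂) = -(star v * dv₂)) :
    (inner ℂ (du₁ (J (v γ₀)) + u (J (dv₁ γ₀)))
           (du₂ (J (v γ₀)) + u (J (dv₂ γ₀))) : ℂ).im =
      (inner ℂ (du₁ γ₀) (du₂ γ₀) : ℂ).im - (inner ℂ (dv₁ γ₀) (dv₂ γ₀) : ℂ).im := by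
  -- basic facts about J
  have hJneg : ∀ ξ : H, J (-ξ) = - J ξ := by
    intro ξ
    simpa using hJsmul (-1) ξ
  have hre : ∀ ξ η : H, (inner ℂ (J ξ) (J η) : ℂ).re = (inner ℂ ξ η : ℂ).re := by
    intro ξ η
    have h1 := norm_add_sq (𝕜 := ℂ) ξ η
    have h2 := norm_add_sq (𝕜 := ℂ) (J ξ) (J η)
    rw [← hJadd, hJnorm, hJnorm, hJnorm] at h2
    simp only [RCLike.re_to_complex] at h1 h2
    linarith [h1, h2]
  have him : ∀ ξ η : H, (inner ℂ ξ η : ℂ).im = - (inner ℂ ξ ((Complex.I) • η) : ℂ).re := by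
    intro ξ η
    rw [inner_smul_right]
    simp
  have hswap : ∀ ξ η : H, (inner ℂ (J ξ) (J η) : ℂ) = inner ℂ η ξ := by
    intro ξ η
    apply Complex.ext
    · rw [hre]
      have h := congrArg Complex.re (inner_conj_symm η ξ)
      simp only [Complex.conj_re] at h
      exact h
    · have hI : (Complex.I) • J η = J ((-Complex.I) • η) := by
        rw [hJsmul]; simp
      rw [him, hI, hre, inner_smul_right, him, inner_smul_right]
      simp only [Complex.neg_re, Complex.mul_re, Complex.I_re, Complex.I_im, Complex.neg_im]
      have := congrArg Complex.im (inner_conj_symm η ξ)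
      simp only [Complex.conj_im] at this
      linarith [this]
  -- facts about j
  have hjmul : ∀ a b : H →L[ℂ] H, j a * j b = j (a * b) := by
    intro a b; ext ξ
    simp [ContinuousLinearMap.mul_apply, hj, hJinv]
  have hjstar : ∀ a : H →L[ℂ] H, star (j a) = j (star a) := by
    intro a
    rw [ContinuousLinearMap.star_eq_adjoint]
    symm
    rw [ContinuousLinearMap.eq_adjoint_iff]
    intro x y
    rw [hj, hj]
    conv_rhs => rw [← hJinv x]
    conv_lhs => rw [← hJinv y]
    rw [hswap, hswap, ← ContinuousLinearMap.adjoint_inner_right a,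
      ← ContinuousLinearMap.star_eq_adjoint]
  have hcomm : ∀ a ∈ M, ∀ b ∈ M, a * j b = j b * a := by
    intro a ha b hb
    exact (VonNeumannAlgebra.mem_commutant_iff.mp (hjM b hb)) a ha
  have hcapp : ∀ a ∈ M, ∀ b ∈ M, ∀ ξ, a (j b ξ) = j b (a ξ) := by
    intro a ha b hb ξ
    have := congrFun (congrArg DFunLike.coe (hcomm a ha b hb)) ξ
    simpa [ContinuousLinearMap.mul_apply] using this
  have hjγ : ∀ a : H →L[ℂ] H, j a γ₀ = J (a γ₀) := by
    intro a; rw [hj, hJγ₀]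
  -- membership helpers
  have hsu : star u ∈ M := star_mem hu
  have hsv : star v ∈ M := star_mem hv
  -- Term 1
  have term1 : (inner ℂ (du₁ (J (v γ₀))) (du₂ (J (v γ₀))) : ℂ)
      = inner ℂ (du₁ γ₀) (du₂ γ₀) := by
    rw [← hjγ v, hcapp du₁ hdu₁ v hv, hcapp du₂ hdu₂ v hv]
    rw [← ContinuousLinearMap.adjoint_inner_right (j v), ← ContinuousLinearMap.star_eq_adjoint,
      hjstar, ← ContinuousLinearMap.comp_apply, ← ContinuousLinearMap.mul_def, hjmul,
      ← hcapp du₂ hdu₂ (star v * v) (mul_mem hsv hv) γ₀, hjγ, hvγ, hJγ₀]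
  -- Term 4
  have term4 : (inner ℂ (u (J (dv₁ γ₀))) (u (J (dv₂ γ₀))) : ℂ)
      = inner ℂ (dv₂ γ₀) (dv₁ γ₀) := by
    rw [← hjγ dv₁, ← hjγ dv₂, hcapp u hu dv₁ hdv₁, hcapp u hu dv₂ hdv₂, hj dv₁, hj dv₂, hswap,
      ← hjγ u, hcapp dv₂ hdv₂ u hu, hcapp dv₁ hdv₁ u hu,
      ← ContinuousLinearMap.adjoint_inner_right (j u), ← ContinuousLinearMap.star_eq_adjoint,
      hjstar, ← ContinuousLinearMap.comp_apply, ← ContinuousLinearMap.mul_def, hjmul,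
      ← hcapp dv₁ hdv₁ (star u * u) (mul_mem hsu hu) γ₀, hjγ, huγ, hJγ₀]
  -- cross terms are real
  have cross : ∀ du dv : H →L[ℂ] H, du ∈ M → dv ∈ M →
      star (star u * du) = -(star u * du) →
      star (star v * dv) = -(star v * dv) →
      (inner ℂ (du (J (v γ₀))) (u (J (dv γ₀))) : ℂ).im = 0 := by
    intro du dv hdu hdv hB hC
    set B := star u * du with hBdef
    set c := j (star v * dv) with hcdef
    have hBm : B ∈ M := mul_mem hsu hdu
    have hCm : star v * dv ∈ M := mul_mem hsv hdv
    have hz : (inner ℂ (du (J (v γ₀))) (u (J (dv γ₀))) : ℂ) = inner ℂ (B γ₀) (c γ₀) := by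
      rw [← hjγ v, ← hjγ dv, hcapp du hdu v hv, hcapp u hu dv hdv,
        ← ContinuousLinearMap.adjoint_inner_right (j v), ← ContinuousLinearMap.star_eq_adjoint,
        hjstar, ← ContinuousLinearMap.comp_apply, ← ContinuousLinearMap.mul_def, hjmul,
        ← hcapp u hu (star v * dv) hCm γ₀,
        ← ContinuousLinearMap.adjoint_inner_left u, ← ContinuousLinearMap.star_eq_adjoint]
      rfl
    rw [hz]
    have hcγ : (star c) γ₀ = -(c γ₀) := by
      rw [hcdef, hjstar, hjγ, hC, hjγ]
      simp [hJneg]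
    have hreal : (starRingEnd ℂ) (inner ℂ (B γ₀) (c γ₀) : ℂ) = inner ℂ (B γ₀) (c γ₀) := by
      rw [inner_conj_symm, ← ContinuousLinearMap.adjoint_inner_right c,
        ← ContinuousLinearMap.star_eq_adjoint,
        hjstar, ← hcapp B hBm (star (star v * dv)) (star_mem hCm) γ₀, ← hjstar, ← hcdef, hcγ,
        map_neg, inner_neg_right, ← ContinuousLinearMap.adjoint_inner_left B,
        ← ContinuousLinearMap.star_eq_adjoint, hB]
      simp
    exact Complex.conj_eq_iff_im.mp hreal
  have c1 := cross du₁ dv₂ hdu₁ hdv₂ h₁ h₄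
  have c2 : (inner ℂ (u (J (dv₁ γ₀))) (du₂ (J (v γ₀))) : ℂ).im = 0 := by
    have := cross du₂ dv₁ hdu₂ hdv₁ h₂ h₃
    rw [← inner_conj_symm (u (J (dv₁ γ₀))) (du₂ (J (v γ₀))), Complex.conj_im, this, neg_zero]
  rw [inner_add_left, inner_add_right, inner_add_right]
  simp only [Complex.add_im]
  rw [term1, term4, c1, c2]
  have h5 := congrArg Complex.im (inner_conj_symm (dv₂ γ₀) (dv₁ γ₀))
  simp only [Complex.conj_im] at h5
  linarith [h5]
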